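/- Let n ≥ 3 be an integer, and for i = 1,…,n−2 define α_i = sin(πi/n)/sin(π(i+1)/n) and β_i = sin(π/n)/sin(π(i+1)/n). Then ∑_{i=1}^{n−2} (1/α_i + α_i + β_i²/α_i) = 2n·cos(π/n). -/

import Mathlib

open Real Finset

private lemma lg_pointwise (x y : ℝ) (ha : 0 < Real.sin x) (hb : 0 < Real.sin (x+y)) :
    1/(sin x / sin (x+y)) + sin x / sin (x+y) + (sin y / sin (x+y))^2 / (sin x / sin (x+y))
    = 2 * cos y + (2 * sin y * cos x / sin x - 2 * sin y * cos (x+y) / sin (x+y)) := by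
  have key : sin (x+y)^2 + sin x^2 + sin y^2
      = 2*cos y*sin x*sin (x+y) + 2*sin y*(cos x*sin (x+y) - cos (x+y)*sin x) := by
    rw [sin_add, cos_add]
    linear_combination (-(sin x ^ 2)) * sin_sq_add_cos_sq y + (-(sin y ^ 2)) * sin_sq_add_cos_sq x
  have ha' := ha.ne'
  have hb' := hb.ne'
  field_simp
  linear_combination key

noncomputable def lgk (n k : ℕ) : ℝ :=
  2 * Real.sin (π/n) * Real.cos (π*k/n) / Real.sin (π*k/n)

theorem lg_coeff_sum (n : ℕ) (hn : 3 ≤ n) :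
    ∑ i ∈ Finset.Icc 1 (n - 2),
      (1 / (Real.sin (π * i / n) / Real.sin (π * (i + 1) / n)) +
        Real.sin (π * i / n) / Real.sin (π * (i + 1) / n) +
        (Real.sin (π / n) / Real.sin (π * (i + 1) / n)) ^ 2 /
          (Real.sin (π * i / n) / Real.sin (π * (i + 1) / n))) =
      2 * n * Real.cos (π / n) := by
  have hn3 : (3:ℝ) ≤ n := by exact_mod_cast hn
  have hn0 : (0:ℝ) < n := by linarith
  have hsin : ∀ k : ℕ, 1 ≤ k → k ≤ n - 1 → 0 < Real.sin (π * k / n) := by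
    intro k h1 h2
    apply Real.sin_pos_of_pos_of_lt_pi
    · have hk0 : (0:ℝ) < k := by exact_mod_cast h1
      exact div_pos (mul_pos Real.pi_pos hk0) hn0
    · rw [div_lt_iff₀ hn0]
      have hk : (k:ℝ) < n := by exact_mod_cast (by omega : k < n)
      nlinarith [Real.pi_pos]
  have key : ∀ i ∈ Finset.Icc 1 (n-2),
      (1 / (Real.sin (π * i / n) / Real.sin (π * (i + 1) / n)) +
        Real.sin (π * i / n) / Real.sin (π * (i + 1) / n) +
        (Real.sin (π / n) / Real.sin (π * (i + 1) / n)) ^ 2 /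
          (Real.sin (π * i / n) / Real.sin (π * (i + 1) / n)))
      = 2 * Real.cos (π/n) + (lgk n i - lgk n (i+1)) := by
    intro i hi
    simp only [Finset.mem_Icc] at hi
    have h1 : 0 < Real.sin (π * i / n) := hsin i hi.1 (by omega)
    have hx : π * ((i:ℝ)+1) / n = π * i / n + π / n := by ring
    have hx' : π * ((i+1 : ℕ) : ℝ) / n = π * i / n + π / n := by push_cast; ring
    have h2 : 0 < Real.sin (π * i / n + π / n) := by
      have := hsin (i+1) (by omega) (by omega)
      rwa [hx'] at this
    rw [hx, lg_pointwise (π*i/n) (π/n) h1 h2]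
    simp only [lgk]
    rw [hx']
  rw [Finset.sum_congr rfl key, Finset.sum_add_distrib, Finset.sum_const, Nat.card_Icc,
    ← Finset.Ico_add_one_right_eq_Icc, Finset.sum_Ico_eq_sum_range]
  have hc : n - 2 + 1 - 1 = n - 2 := by omega
  have tel : ∑ k ∈ Finset.range (n-2), (lgk n (1+k) - lgk n (1+k+1))
      = lgk n 1 - lgk n (1+(n-2)) := by
    have h := Finset.sum_range_sub' (fun i => lgk n (1+i)) (n-2)
    simpa [add_assoc] using h
  rw [hc, tel]
  have e1 : lgk n 1 = 2 * Real.cos (π/n) := by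
    have h1 : Real.sin (π * (1:ℕ) / n) ≠ 0 := (hsin 1 le_rfl (by omega)).ne'
    simp only [lgk, Nat.cast_one, mul_one] at h1 ⊢
    field_simp
  have e2 : lgk n (1+(n-2)) = -(2 * Real.cos (π/n)) := by
    have hne : (1+(n-2)) = n - 1 := by omega
    rw [hne]
    have harg : π * ((n-1 : ℕ) : ℝ) / n = π - π / n := by
      have : ((n-1 : ℕ) : ℝ) = (n:ℝ) - 1 := by
        push_cast [Nat.cast_sub (by omega : 1 ≤ n)]; ring
      rw [this]; field_simp
    have h1 : Real.sin (π / n) ≠ 0 := by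
      have := hsin 1 le_rfl (by omega)
      rw [Nat.cast_one, mul_one] at this
      exact this.ne'
    simp only [lgk, harg, Real.sin_pi_sub, Real.cos_pi_sub]
    field_simp
  rw [e1, e2]
  have hcast : ((n-2 : ℕ) : ℝ) = (n:ℝ) - 2 := by
    push_cast [Nat.cast_sub (by omega : 2 ≤ n)]; ring
  rw [nsmul_eq_mul, hcast]
  ring
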